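/- Let P be a row-stochastic matrix and D a diagonal matrix with strictly positive diagonal entries. If λ is a nonzero eigenvalue of L = D(I - P), then Re(λ) > 0. More precisely, for any eigenvalue λ with eigenvector x maximized in modulus at coordinate k, one has 2·d(k)·Re(λ) ≥ |λ|². -/

import Mathlib

open Matrix

theorem stmt1 (n : ℕ) (P : Matrix (Fin n) (Fin n) ℝ) (d : Fin n → ℝ)
    (hP0 : ∀ i j, 0 ≤ P i j) (hP1 : ∀ i, ∑ j, P i j = 1)
    (hd : ∀ i, 0 < d i)
    (lam : ℂ) (x : Fin n → ℂ) (hx : x ≠ 0)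
    (heig : ((Matrix.diagonal d * (1 - P)).map (Complex.ofReal)).mulVec x = lam • x)
    (k : Fin n) (hk : ∀ j, ‖x j‖ ≤ ‖x k‖) :
    (lam ≠ 0 → 0 < lam.re) ∧ ‖lam‖ ^ 2 ≤ 2 * d k * lam.re := by
  -- extract the k-th component of the eigen-equation
  have h1 : (d k : ℂ) * (x k - ∑ j, (P k j : ℂ) * x j) = lam * x k := by
    have h := congrFun heig k
    simp [Matrix.mulVec, dotProduct, Matrix.map_apply, Matrix.mul_apply,
      Matrix.diagonal_apply, Matrix.sub_apply, Matrix.one_apply, ite_mul,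
      Finset.sum_ite_eq, sub_mul, Finset.sum_sub_distrib, Finset.mul_sum,
      mul_sub] at h ⊢
    simp only [apply_ite Complex.ofReal, Complex.ofReal_zero, ite_mul, zero_mul,
      Finset.sum_ite_eq, Finset.mem_univ, if_true, mul_assoc] at h
    convert h using 2
  -- x k is nonzero
  have hxk : x k ≠ 0 := by
    intro h0
    apply hx
    funext j
    have := hk j
    rw [h0] at this
    simpa using norm_eq_zero.mp (le_antisymm (by simpa using this) (norm_nonneg _))
  -- bound the weighted sum
  have hy : ‖∑ j, (P k j : ℂ) * x j‖ ≤ ‖x k‖ := by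
    calc ‖∑ j, (P k j : ℂ) * x j‖ ≤ ∑ j, ‖(P k j : ℂ) * x j‖ := by
          exact norm_sum_le _ _
      _ ≤ ∑ j, P k j * ‖x k‖ := by
          apply Finset.sum_le_sum
          intro j _
          rw [norm_mul, Complex.norm_real, Real.norm_eq_abs, abs_of_nonneg (hP0 k j)]
          exact mul_le_mul_of_nonneg_left (hk j) (hP0 k j)
      _ = ‖x k‖ := by rw [← Finset.sum_mul, hP1 k, one_mul]
  -- |d k - lam| ≤ d k
  have h2 : ((d k : ℂ) - lam) * x k = (d k : ℂ) * ∑ j, (P k j : ℂ) * x j := by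
    ring_nf
    ring_nf at h1
    linear_combination h1
  have habs : ‖(d k : ℂ) - lam‖ ≤ d k := by
    have := congrArg (‖·‖) h2
    rw [norm_mul, norm_mul, Complex.norm_real, Real.norm_eq_abs, abs_of_pos (hd k)] at this
    have h3 : ‖(d k : ℂ) - lam‖ * ‖x k‖
        ≤ d k * ‖x k‖ := by
      rw [this]
      exact mul_le_mul_of_nonneg_left hy (le_of_lt (hd k))
    have hpos : 0 < ‖x k‖ := norm_pos_iff.mpr hxk
    exact le_of_mul_le_mul_right h3 hpos
  -- square it
  have hsq : ‖(d k : ℂ) - lam‖ ^ 2 ≤ d k ^ 2 :=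
    pow_le_pow_left₀ (norm_nonneg _) habs 2
  rw [Complex.sq_norm, Complex.normSq_apply] at hsq
  simp only [Complex.sub_re, Complex.sub_im, Complex.ofReal_re, Complex.ofReal_im,
    zero_sub] at hsq
  have key : ‖lam‖ ^ 2 ≤ 2 * d k * lam.re := by
    rw [Complex.sq_norm, Complex.normSq_apply]
    nlinarith [hsq]
  refine ⟨fun hlam => ?_, key⟩
  have : 0 < ‖lam‖ := norm_pos_iff.mpr hlam
  nlinarith [key, hd k]
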